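/- Let k ≥ 1. Call a permutation s of {1,…,2k} parity-swapping if s maps every odd number to an even number (and hence every even number to an odd number). For parity-swapping s, define σ₁^s, σ₂^s ∈ S_k by σ₁^s(m) = n if and only if s(2m−1) = 2n, and σ₂^s(m) = n if and only if s(2m) = 2n−1; set σ̃^s := σ₂^s ∘ σ₁^s. Let H ≤ S_{2k} be the subgroup of parity-preserving permutations (those mapping odd numbers to odd numbers and even numbers to even numbers). Then for any two parity-swapping permutations s, s' ∈ S_{2k}: there exists σ ∈ H with s' = σ∘s∘σ⁻¹ if and only if σ̃^{s'} and σ̃^{s} are conjugate in S_k. -/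

import Mathlib

/-- The element of `Fin (2k)` representing the odd number `2m−1` (with `m` 1-based;
using 0-based values, the odd numbers `1, 3, …, 2k−1` are the elements of even value
`0, 2, …, 2k−2`). -/
def oddIdx {k : ℕ} (m : Fin k) : Fin (2 * k) :=
  ⟨2 * m.val, by have := m.isLt; omega⟩

/-- The element of `Fin (2k)` representing the even number `2n` (0-based value `2n−1`). -/
def evenIdx {k : ℕ} (n : Fin k) : Fin (2 * k) :=
  ⟨2 * n.val + 1, by have := n.isLt; omega⟩

/-- A permutation of `{1, …, 2k}` is parity-swapping if it maps every odd number to an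
even number (and hence every even number to an odd number).  In terms of 0-based values,
elements of even value go to elements of odd value. -/
def ParitySwapping {k : ℕ} (s : Equiv.Perm (Fin (2 * k))) : Prop :=
  ∀ i : Fin (2 * k), i.val % 2 = 0 → (s i).val % 2 = 1

/-- A permutation of `{1, …, 2k}` is parity-preserving if it maps odd numbers to odd
numbers and even numbers to even numbers. -/
def ParityPreserving {k : ℕ} (σ : Equiv.Perm (Fin (2 * k))) : Prop :=
  ∀ i : Fin (2 * k), (σ i).val % 2 = i.val % 2

namespace ParityAux

variable {k : ℕ}

lemma oddIdx_val (m : Fin k) : (oddIdx m).val = 2 * m.val := rfl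
lemma evenIdx_val (n : Fin k) : (evenIdx n).val = 2 * n.val + 1 := rfl
lemma perm_inv_apply_self {α : Type*} (f : Equiv.Perm α) (x : α) : f⁻¹ (f x) = x := Equiv.Perm.inv_eq_iff_eq.mpr rfl
lemma perm_apply_inv_self {α : Type*} (f : Equiv.Perm α) (x : α) : f (f⁻¹ x) = x := (Equiv.eq_symm_apply f).mp rfl

/-- Interleave two permutations of `Fin k` into a parity-preserving
permutation of `Fin (2k)`. -/
def interleaveFun (α β : Equiv.Perm (Fin k)) (i : Fin (2 * k)) : Fin (2 * k) :=
  if i.val % 2 = 0 then oddIdx (α ⟨i.val / 2, by have := i.isLt; omega⟩)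
  else evenIdx (β ⟨i.val / 2, by have := i.isLt; omega⟩)

lemma interleaveFun_inj (α β : Equiv.Perm (Fin k)) :
    Function.Injective (interleaveFun α β) := by
  intro i j hij
  unfold interleaveFun at hij
  by_cases hi : i.val % 2 = 0 <;> by_cases hj : j.val % 2 = 0
  · rw [if_pos hi, if_pos hj] at hij
    have h1 : 2 * (α ⟨i.val / 2, by have := i.isLt; omega⟩).val
        = 2 * (α ⟨j.val / 2, by have := j.isLt; omega⟩).val := congrArg Fin.val hij
    have h2 : (α ⟨i.val / 2, by have := i.isLt; omega⟩)
        = (α ⟨j.val / 2, by have := j.isLt; omega⟩) := Fin.ext (by omega)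
    have h3 := congrArg Fin.val (α.injective h2)
    simp only at h3
    exact Fin.ext (by omega)
  · rw [if_pos hi, if_neg hj] at hij
    have h1 := congrArg Fin.val hij
    simp only [oddIdx_val, evenIdx_val] at h1
    omega
  · rw [if_neg hi, if_pos hj] at hij
    have h1 := congrArg Fin.val hij
    simp only [oddIdx_val, evenIdx_val] at h1
    omega
  · rw [if_neg hi, if_neg hj] at hij
    have h1 : 2 * (β ⟨i.val / 2, by have := i.isLt; omega⟩).val + 1
        = 2 * (β ⟨j.val / 2, by have := j.isLt; omega⟩).val + 1 := congrArg Fin.val hij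
    have h2 : (β ⟨i.val / 2, by have := i.isLt; omega⟩)
        = (β ⟨j.val / 2, by have := j.isLt; omega⟩) := Fin.ext (by omega)
    have h3 := congrArg Fin.val (β.injective h2)
    simp only at h3
    exact Fin.ext (by omega)

noncomputable def interleave (α β : Equiv.Perm (Fin k)) : Equiv.Perm (Fin (2 * k)) :=
  Equiv.ofBijective _ (Finite.injective_iff_bijective.mp (interleaveFun_inj α β))

lemma interleave_apply (α β : Equiv.Perm (Fin k)) (i : Fin (2 * k)) :
    interleave α β i = interleaveFun α β i := rfl

lemma interleave_oddIdx (α β : Equiv.Perm (Fin k)) (m : Fin k) :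
    interleave α β (oddIdx m) = oddIdx (α m) := by
  rw [interleave_apply]
  unfold interleaveFun
  rw [if_pos (by simp only [oddIdx_val]; omega)]
  congr 2
  exact Fin.ext (by simp only [oddIdx_val]; omega)

lemma interleave_evenIdx (α β : Equiv.Perm (Fin k)) (n : Fin k) :
    interleave α β (evenIdx n) = evenIdx (β n) := by
  rw [interleave_apply]
  unfold interleaveFun
  rw [if_neg (by simp only [evenIdx_val]; omega)]
  congr 2
  exact Fin.ext (by simp only [evenIdx_val]; omega)

lemma interleave_parityPreserving (α β : Equiv.Perm (Fin k)) :
    ParityPreserving (interleave α β) := by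
  intro i
  rw [interleave_apply]
  unfold interleaveFun
  by_cases h : i.val % 2 = 0
  · rw [if_pos h, oddIdx_val]; omega
  · rw [if_neg h, evenIdx_val]; omega

end ParityAux

open ParityAux in
/-- for parity-swapping `s, s' ∈ S_{2k}`, with `σ₁^s, σ₂^s ∈ S_k` defined by
`σ₁^s(m) = n ↔ s(2m−1) = 2n` and `σ₂^s(m) = n ↔ s(2m) = 2n−1`, and `σ̃^s = σ₂^s ∘ σ₁^s`:
`s'` is conjugate to `s` by a parity-preserving permutation if and only if `σ̃^{s'}` and
`σ̃^s` are conjugate in `S_k`. -/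
theorem parity_swapping_conj_iff (k : ℕ) (hk : 1 ≤ k)
    (s s' : Equiv.Perm (Fin (2 * k)))
    (hs : ParitySwapping s) (hs' : ParitySwapping s')
    (σ₁ σ₂ σ₁' σ₂' : Equiv.Perm (Fin k))
    (hσ₁ : ∀ m n : Fin k, σ₁ m = n ↔ s (oddIdx m) = evenIdx n)
    (hσ₂ : ∀ m n : Fin k, σ₂ m = n ↔ s (evenIdx m) = oddIdx n)
    (hσ₁' : ∀ m n : Fin k, σ₁' m = n ↔ s' (oddIdx m) = evenIdx n)
    (hσ₂' : ∀ m n : Fin k, σ₂' m = n ↔ s' (evenIdx m) = oddIdx n) :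
    (∃ σ : Equiv.Perm (Fin (2 * k)), ParityPreserving σ ∧ s' = σ * s * σ⁻¹) ↔
      (∃ τ : Equiv.Perm (Fin k), σ₂' * σ₁' = τ * (σ₂ * σ₁) * τ⁻¹) := by
  have hs1 : ∀ m, s (oddIdx m) = evenIdx (σ₁ m) := fun m => (hσ₁ m _).mp rfl
  have hs2 : ∀ m, s (evenIdx m) = oddIdx (σ₂ m) := fun m => (hσ₂ m _).mp rfl
  have hs1' : ∀ m, s' (oddIdx m) = evenIdx (σ₁' m) := fun m => (hσ₁' m _).mp rfl
  have hs2' : ∀ m, s' (evenIdx m) = oddIdx (σ₂' m) := fun m => (hσ₂' m _).mp rfl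
  constructor
  · rintro ⟨σ, hσ, rfl⟩
    -- the induced permutation on odd positions
    set f : Fin k → Fin k :=
      fun m => ⟨(σ (oddIdx m)).val / 2, by have := (σ (oddIdx m)).isLt; omega⟩ with hf
    have hfeven : ∀ m, (σ (oddIdx m)).val % 2 = 0 := by
      intro m
      have := hσ (oddIdx m)
      rw [oddIdx_val] at this
      omega
    have hfinj : Function.Injective f := by
      intro a b hab
      have h1 : (σ (oddIdx a)).val / 2 = (σ (oddIdx b)).val / 2 := congrArg Fin.val hab
      have h2 : σ (oddIdx a) = σ (oddIdx b) :=
        Fin.ext (by have := hfeven a; have := hfeven b; omega)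
      have h3 := congrArg Fin.val (σ.injective h2)
      rw [oddIdx_val, oddIdx_val] at h3
      exact Fin.ext (by omega)
    let τ : Equiv.Perm (Fin k) := Equiv.ofBijective f (Finite.injective_iff_bijective.mp hfinj)
    have hσodd : ∀ m, σ (oddIdx m) = oddIdx (τ m) := by
      intro m
      have h0 := hfeven m
      exact Fin.ext (by rw [oddIdx_val]; show _ = 2 * ((σ (oddIdx m)).val / 2); omega)
    -- the induced map on even positions
    set g : Fin k → Fin k :=
      fun n => ⟨(σ (evenIdx n)).val / 2, by have := (σ (evenIdx n)).isLt; omega⟩ with hg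
    have hσeven : ∀ n, σ (evenIdx n) = evenIdx (g n) := by
      intro n
      have h0 : (σ (evenIdx n)).val % 2 = 1 := by
        have := hσ (evenIdx n)
        rw [evenIdx_val] at this
        omega
      exact Fin.ext (by rw [evenIdx_val]; show _ = 2 * ((σ (evenIdx n)).val / 2) + 1; omega)
    have key1 : ∀ m, σ₁' (τ m) = g (σ₁ m) := by
      intro m
      apply (hσ₁' (τ m) (g (σ₁ m))).mpr
      have h1 : σ⁻¹ (oddIdx (τ m)) = oddIdx m := by
        rw [← hσodd m, perm_inv_apply_self]
      calc (σ * s * σ⁻¹) (oddIdx (τ m))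
          = σ (s (σ⁻¹ (oddIdx (τ m)))) := rfl
        _ = evenIdx (g (σ₁ m)) := by rw [h1, hs1, hσeven]
    have key2 : ∀ n, σ₂' (g n) = τ (σ₂ n) := by
      intro n
      apply (hσ₂' (g n) (τ (σ₂ n))).mpr
      have h1 : σ⁻¹ (evenIdx (g n)) = evenIdx n := by
        rw [← hσeven n, perm_inv_apply_self]
      calc (σ * s * σ⁻¹) (evenIdx (g n))
          = σ (s (σ⁻¹ (evenIdx (g n)))) := rfl
        _ = oddIdx (τ (σ₂ n)) := by rw [h1, hs2, hσodd]
    have hmain : (σ₂' * σ₁') * τ = τ * (σ₂ * σ₁) := by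
      ext m
      simp only [Equiv.Perm.mul_apply]
      rw [key1 m, key2 (σ₁ m)]
    exact ⟨τ, eq_mul_inv_iff_mul_eq.mpr hmain⟩
  · rintro ⟨τ, hτ⟩
    refine ⟨interleave τ (σ₁' * τ * σ₁⁻¹), interleave_parityPreserving _ _, ?_⟩
    have hpt : ∀ x, σ₂' (σ₁' x) = τ (σ₂ (σ₁ (τ⁻¹ x))) := by
      intro x
      have := DFunLike.congr_fun hτ x
      simpa only [Equiv.Perm.mul_apply] using this
    apply eq_mul_inv_iff_mul_eq.mpr
    ext i
    simp only [Equiv.Perm.mul_apply]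
    by_cases h : i.val % 2 = 0
    · have hi : i = oddIdx ⟨i.val / 2, by have := i.isLt; omega⟩ :=
        Fin.ext (by rw [oddIdx_val]; show i.val = 2 * (i.val / 2); omega)
      rw [hi]
      generalize (⟨i.val / 2, by have := i.isLt; omega⟩ : Fin k) = m
      rw [hs1, interleave_oddIdx, interleave_evenIdx, hs1']
      congr 1
      simp only [Equiv.Perm.mul_apply, perm_inv_apply_self]
    · have hi : i = evenIdx ⟨i.val / 2, by have := i.isLt; omega⟩ :=
        Fin.ext (by rw [evenIdx_val]; show i.val = 2 * (i.val / 2) + 1; omega)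
      rw [hi]
      generalize (⟨i.val / 2, by have := i.isLt; omega⟩ : Fin k) = n
      rw [hs2, interleave_evenIdx, interleave_oddIdx, hs2']
      congr 1
      have := hpt (τ (σ₁⁻¹ n))
      simp only [Equiv.Perm.mul_apply, perm_inv_apply_self] at this ⊢
      rw [this, perm_apply_inv_self]
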